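/- Let k be a positive integer that is not a power of 2, and let c : Fin 3 → ℕ → ℕ be a counting array of a solution, i.e., c is finitely supported and ∑_{a<3, b} (c a b : ℚ)/(2^a * k^b) = 1. Let β be the largest b such that c a b ≠ 0 for some a, and suppose β ≥ 1 (i.e., the solution is nontrivial). Then there exists a counting array c' of a solution (finitely supported, ∑_{a<3, b} (c' a b : ℚ)/(2^a * k^b) = 1) with total number of terms ∑_{a,b} c' a b ≤ ∑_{a,b} c a b, with β again the largest b such that c' a b ≠ 0 for some a, and with row β of c' equal to one of the following triples (c' 0 β, c' 1 β, c' 2 β): if k ≡ 0 (mod 4): (k/4, 0, 0); if k ≡ 1 (mod 4): (k, 0, 0), ((k-1)/4, 0, 1), ((k-1)/2, 1, 0), or ((3k-3)/4, 1, 1); if k ≡ 2 (mod 4): (k/2, 0, 0) or ((k-2)/4, 1, 0); if k ≡ 3 (mod 4): (k, 0, 0), ((3k-1)/4, 0, 1), ((k-1)/2, 1, 0), or ((k-3)/4, 1, 1). -/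

import Mathlib

open Finset in
private lemma finsum3_eq {M : Type*} [AddCommMonoid M] (f : Fin 3 → ℕ → M) (n : ℕ)
    (h : ∀ a b, n ≤ b → f a b = 0) :
    ∑ᶠ (a : Fin 3) (b : ℕ), f a b = ∑ a : Fin 3, ∑ b ∈ Finset.range n, f a b := by
  rw [finsum_eq_sum_of_fintype]
  refine Finset.sum_congr rfl fun a _ => ?_
  refine finsum_eq_finset_sum_of_support_subset _ ?_
  intro b hb
  simp only [Function.mem_support] at hb
  simp only [Finset.coe_range, Set.mem_Iio]
  by_contra hbn
  exact hb (h a b (by omega))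



set_option maxHeartbeats 1000000 in
/-- Lemma 4.4: for `k` not a power of 2 and a nontrivial solution with counting
array `c` and top nonzero row index `β ≥ 1`, there is a solution with counting
array `c'`, with no more terms, whose top nonzero row is again indexed by `β` and
equals one of the minimal rows that reduce to zero under a single application of
one of Moves 2–5. -/
theorem exists_one_reduction_solution (k : ℕ) (hk : 0 < k)
    (hk2 : ¬ ∃ m : ℕ, k = 2 ^ m)
    (c : Fin 3 → ℕ → ℕ)
    (hfin : {p : Fin 3 × ℕ | c p.1 p.2 ≠ 0}.Finite)
    (hsum : ∑ᶠ (a : Fin 3) (b : ℕ), (c a b : ℚ) / (2 ^ (a : ℕ) * (k : ℚ) ^ b) = 1)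
    (β : ℕ) (hβtop : ∃ a, c a β ≠ 0) (hβmax : ∀ b, (∃ a, c a b ≠ 0) → b ≤ β)
    (hβ1 : 1 ≤ β) :
    ∃ c' : Fin 3 → ℕ → ℕ,
      {p : Fin 3 × ℕ | c' p.1 p.2 ≠ 0}.Finite ∧
      (∑ᶠ (a : Fin 3) (b : ℕ), (c' a b : ℚ) / (2 ^ (a : ℕ) * (k : ℚ) ^ b)) = 1 ∧
      (∑ᶠ (a : Fin 3) (b : ℕ), c' a b) ≤ (∑ᶠ (a : Fin 3) (b : ℕ), c a b) ∧
      (∃ a, c' a β ≠ 0) ∧ (∀ b, (∃ a, c' a b ≠ 0) → b ≤ β) ∧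
      ((k % 4 = 0 ∧ (c' 0 β, c' 1 β, c' 2 β) = (k / 4, 0, 0)) ∨
        (k % 4 = 1 ∧
          ((c' 0 β, c' 1 β, c' 2 β) = (k, 0, 0) ∨
            (c' 0 β, c' 1 β, c' 2 β) = ((k - 1) / 4, 0, 1) ∨
            (c' 0 β, c' 1 β, c' 2 β) = ((k - 1) / 2, 1, 0) ∨
            (c' 0 β, c' 1 β, c' 2 β) = ((3 * k - 3) / 4, 1, 1))) ∨
        (k % 4 = 2 ∧
          ((c' 0 β, c' 1 β, c' 2 β) = (k / 2, 0, 0) ∨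
            (c' 0 β, c' 1 β, c' 2 β) = ((k - 2) / 4, 1, 0))) ∨
        (k % 4 = 3 ∧
          ((c' 0 β, c' 1 β, c' 2 β) = (k, 0, 0) ∨
            (c' 0 β, c' 1 β, c' 2 β) = ((3 * k - 1) / 4, 0, 1) ∨
            (c' 0 β, c' 1 β, c' 2 β) = ((k - 1) / 2, 1, 0) ∨
            (c' 0 β, c' 1 β, c' 2 β) = ((k - 3) / 4, 1, 1)))) := by
  obtain ⟨γ, rfl⟩ : ∃ γ, β = γ + 1 := ⟨β - 1, by omega⟩
  have hk3 : 3 ≤ k := by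
    rcases Nat.lt_or_ge k 3 with h | h
    · interval_cases k
      · exact absurd ⟨0, rfl⟩ hk2
      · exact absurd ⟨1, rfl⟩ hk2
    · exact h
  have hczero : ∀ (a : Fin 3) (b : ℕ), γ + 2 ≤ b → c a b = 0 := by
    intro a b hb
    by_contra h
    have := hβmax b ⟨a, h⟩
    omega
  have hQ : ∑ a : Fin 3, ∑ b ∈ Finset.range (γ+2), (c a b : ℚ) / (2 ^ (a : ℕ) * (k : ℚ) ^ b) = 1 := by
    rw [← finsum3_eq _ (γ+2) (fun a b hb => by rw [hczero a b hb]; simp)]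
    exact hsum
  -- integer sum
  obtain ⟨S, hSdef⟩ : ∃ S, S = ∑ a : Fin 3, ∑ b ∈ Finset.range (γ+2),
      c a b * (2 ^ (2 - (a:ℕ)) * k ^ (γ + 1 - b)) := ⟨_, rfl⟩
  have hk0 : (k:ℚ) ≠ 0 := by positivity
  have hSQ : (S : ℚ) = 4 * (k:ℚ) ^ (γ+1) := by
    have h1 : (S : ℚ) = ∑ a : Fin 3, ∑ b ∈ Finset.range (γ+2),
        (c a b : ℚ) * (2 ^ (2 - (a:ℕ)) * (k:ℚ) ^ (γ + 1 - b)) := by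
      rw [hSdef]
      push_cast
      ring
    have h2' : ∑ a : Fin 3, ∑ b ∈ Finset.range (γ+2),
        (c a b : ℚ) * (2 ^ (2 - (a:ℕ)) * (k:ℚ) ^ (γ + 1 - b))
        = (∑ a : Fin 3, ∑ b ∈ Finset.range (γ+2), (c a b : ℚ) / (2 ^ (a : ℕ) * (k : ℚ) ^ b))
          * (4 * (k:ℚ) ^ (γ+1)) := by
      rw [Finset.sum_mul]
      refine Finset.sum_congr rfl fun a _ => ?_
      rw [Finset.sum_mul]
      refine Finset.sum_congr rfl fun b hb => ?_
      have ha : (a:ℕ) ≤ 2 := by omega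
      have hb' : b ≤ γ + 1 := by simp only [Finset.mem_range] at hb; omega
      have hne : (2:ℚ) ^ (a:ℕ) * (k:ℚ) ^ b ≠ 0 := by positivity
      rw [div_mul_eq_mul_div, eq_comm, div_eq_iff hne]
      have h2 : (2:ℚ) ^ (2 - (a:ℕ)) * 2 ^ (a:ℕ) = 4 := by
        rw [← pow_add, Nat.sub_add_cancel ha]; norm_num
      have hkk : (k:ℚ) ^ (γ + 1 - b) * (k:ℚ) ^ b = (k:ℚ) ^ (γ+1) := by
        rw [← pow_add, Nat.sub_add_cancel hb']
      rw [← h2, ← hkk]; ring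
    rw [h1, h2', hQ, one_mul]
  have hSnat : S = 4 * k ^ (γ+1) := by exact_mod_cast hSQ
  obtain ⟨N, hNdef⟩ : ∃ N, N = 4 * c 0 (γ+1) + 2 * c 1 (γ+1) + c 2 (γ+1) := ⟨_, rfl⟩
  obtain ⟨P, hPdef⟩ : ∃ P, P = ∑ a : Fin 3, ∑ b ∈ Finset.range (γ+1),
      c a b * (2 ^ (2 - (a:ℕ)) * k ^ (γ + 1 - b)) := ⟨_, rfl⟩
  have hSP : S = P + N := by
    rw [hSdef, hPdef, hNdef]
    simp only [Finset.sum_range_succ]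
    rw [Finset.sum_add_distrib]
    congr 1
    rw [Fin.sum_univ_three]
    norm_num
    ring
  have hkP : k ∣ P := by
    rw [hPdef]
    refine Finset.dvd_sum fun a _ => Finset.dvd_sum fun b hb => ?_
    have hb' : b < γ + 1 := Finset.mem_range.mp hb
    exact Dvd.dvd.mul_left (Dvd.dvd.mul_left (dvd_pow_self k (by omega)) _) _
  have hkN : k ∣ N := by
    have hkS : k ∣ S := by
      rw [hSnat]
      exact Dvd.dvd.mul_left (dvd_pow_self k (by omega)) 4
    rw [hSP] at hkS
    exact (Nat.dvd_add_right hkP).mp hkS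
  have hNpos : 0 < N := by
    have h3 : c 0 (γ+1) ≠ 0 ∨ c 1 (γ+1) ≠ 0 ∨ c 2 (γ+1) ≠ 0 := by
      obtain ⟨a, ha⟩ := hβtop
      fin_cases a
      · exact Or.inl ha
      · exact Or.inr (Or.inl ha)
      · exact Or.inr (Or.inr ha)
    omega
  obtain ⟨m, hm⟩ : ∃ m, N = m * k := ⟨N / k, (Nat.div_mul_cancel hkN).symm⟩
  have hm1 : 1 ≤ m := by
    rcases Nat.eq_zero_or_pos m with h | h
    · subst h; simp at hm; omega
    · exact h
  obtain ⟨m₀, hm₀⟩ : ∃ m₀, m₀ = if k % 2 = 1 then (m-1) % 4 + 1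
      else if k % 4 = 2 then (m-1) % 2 + 1 else 1 := ⟨_, rfl⟩
  have hm₀m : m₀ ≤ m ∧ 1 ≤ m₀ ∧ m₀ ≤ 4 := by split_ifs at hm₀ <;> omega
  obtain ⟨j, hj⟩ : ∃ j, j = m - m₀ := ⟨_, rfl⟩
  obtain ⟨M, hM⟩ : ∃ M, M = m₀ * k := ⟨_, rfl⟩
  obtain ⟨J, hJ⟩ : ∃ J, J = j * k := ⟨_, rfl⟩
  have hNMJ : N = M + J := by
    rw [hm, hM, hJ, ← add_mul]
    congr 1
    omega
  have hJ4 : 4 ∣ J := by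
    rcases Nat.lt_or_ge (k % 2) 1 with hpar | hpar
    · -- k even
      rcases Nat.decEq (k % 4) 2 with h42 | h42
      · -- k % 4 ∈ {0}
        have h4k : 4 ∣ k := by omega
        rw [hJ]; exact Dvd.dvd.mul_left h4k j
      · -- k % 4 = 2
        have h2j : 2 ∣ j := by
          have : m₀ = (m-1) % 2 + 1 := by rw [hm₀]; simp [show k % 2 ≠ 1 by omega, h42]
          omega
        have h2k : 2 ∣ k := by omega
        rw [hJ, show (4:ℕ) = 2 * 2 by norm_num]
        exact mul_dvd_mul h2j h2k
    · -- k odd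
      have h4j : 4 ∣ j := by
        have : m₀ = (m-1) % 4 + 1 := by rw [hm₀]; simp [show k % 2 = 1 by omega]
        omega
      rw [hJ]; exact Dvd.dvd.mul_right h4j k
  have h3J : 3 * j ≤ J := by
    rw [hJ, mul_comm j k]
    exact Nat.mul_le_mul_right j hk3
  obtain ⟨T, hT⟩ : ∃ T : Fin 3 → ℕ, T = ![M/4, M%4/2, M%2] := ⟨_, rfl⟩
  obtain ⟨d, hd⟩ : ∃ d : Fin 3 → ℕ, d = ![j/4, j%4/2, j%2] := ⟨_, rfl⟩
  obtain ⟨c', hc'⟩ : ∃ c' : Fin 3 → ℕ → ℕ,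
      c' = fun a b => if b = γ+1 then T a else if b = γ then c a b + d a else c a b := ⟨_, rfl⟩
  have hT0 : T 0 = M/4 := by rw [hT]; rfl
  have hT1 : T 1 = M%4/2 := by rw [hT]; rfl
  have hT2 : T 2 = M%2 := by rw [hT]; rfl
  have hd0 : d 0 = j/4 := by rw [hd]; rfl
  have hd1 : d 1 = j%4/2 := by rw [hd]; rfl
  have hd2 : d 2 = j%2 := by rw [hd]; rfl
  have hc'top : ∀ a, c' a (γ+1) = T a := fun a => by rw [hc']; simp
  have hc'γ : ∀ a, c' a γ = c a γ + d a := fun a => by rw [hc']; simp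
  have hc'lo : ∀ (a : Fin 3) (b : ℕ), b < γ → c' a b = c a b := fun a b hb => by
    rw [hc']
    simp only []
    rw [if_neg (by omega), if_neg (by omega)]
  have hc'zero : ∀ (a : Fin 3) (b : ℕ), γ + 2 ≤ b → c' a b = 0 := fun a b hb => by
    rw [hc']
    simp only []
    rw [if_neg (by omega), if_neg (by omega)]
    exact hczero a b hb
  have hTsum : 4 * T 0 + 2 * T 1 + T 2 = M := by rw [hT0, hT1, hT2]; omega
  have hdsum : 4 * d 0 + 2 * d 1 + d 2 = j := by rw [hd0, hd1, hd2]; omega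
  have hkeyN : (4 * T 0 + 2 * T 1 + T 2) + (4 * d 0 + 2 * d 1 + d 2) * k
      = 4 * c 0 (γ+1) + 2 * c 1 (γ+1) + c 2 (γ+1) := by
    rw [hTsum, hdsum, ← hJ]
    omega
  have hkey : ((4 * T 0 + 2 * T 1 + T 2 : ℕ) : ℚ) + ((4 * d 0 + 2 * d 1 + d 2 : ℕ) : ℚ) * (k:ℚ)
      = ((4 * c 0 (γ+1) + 2 * c 1 (γ+1) + c 2 (γ+1) : ℕ) : ℚ) := by
    exact_mod_cast congrArg (fun n : ℕ => (n : ℚ)) hkeyN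
  have hγcol : (∑ a : Fin 3, (c' a γ : ℚ) / (2 ^ (a:ℕ) * (k:ℚ) ^ γ))
        + (∑ a : Fin 3, (c' a (γ+1) : ℚ) / (2 ^ (a:ℕ) * (k:ℚ) ^ (γ+1)))
      = (∑ a : Fin 3, (c a γ : ℚ) / (2 ^ (a:ℕ) * (k:ℚ) ^ γ))
        + (∑ a : Fin 3, (c a (γ+1) : ℚ) / (2 ^ (a:ℕ) * (k:ℚ) ^ (γ+1))) := by
    simp only [hc'top, hc'γ]
    rw [Fin.sum_univ_three, Fin.sum_univ_three, Fin.sum_univ_three, Fin.sum_univ_three]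
    have hkγ : (k:ℚ) ^ γ ≠ 0 := by positivity
    push_cast at hkey ⊢
    simp only [Fin.val_zero, Fin.val_one, Fin.val_two, pow_zero, pow_one, pow_succ, one_mul]
    field_simp
    ring_nf
    simp only [Nat.add_comm 1 γ]
    linear_combination hkey
  have hQ' : ∑ a : Fin 3, ∑ b ∈ Finset.range (γ+2), (c' a b : ℚ) / (2 ^ (a : ℕ) * (k : ℚ) ^ b) = 1 := by
    rw [Finset.sum_comm] at hQ ⊢
    rw [Finset.sum_range_succ, Finset.sum_range_succ] at hQ ⊢
    have hlow : (∑ b ∈ Finset.range γ, ∑ a : Fin 3, (c' a b : ℚ) / (2 ^ (a:ℕ) * (k:ℚ) ^ b))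
        = ∑ b ∈ Finset.range γ, ∑ a : Fin 3, (c a b : ℚ) / (2 ^ (a:ℕ) * (k:ℚ) ^ b) := by
      refine Finset.sum_congr rfl fun b hb => Finset.sum_congr rfl fun a _ => ?_
      rw [hc'lo a b (Finset.mem_range.mp hb)]
    rw [hlow]
    linarith [hγcol]
  have hcount : (∑ a : Fin 3, ∑ b ∈ Finset.range (γ+2), c' a b)
      ≤ ∑ a : Fin 3, ∑ b ∈ Finset.range (γ+2), c a b := by
    rw [show (∑ a : Fin 3, ∑ b ∈ Finset.range (γ+2), c' a b)
        = ∑ b ∈ Finset.range (γ+2), ∑ a : Fin 3, c' a b from Finset.sum_comm,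
      show (∑ a : Fin 3, ∑ b ∈ Finset.range (γ+2), c a b)
        = ∑ b ∈ Finset.range (γ+2), ∑ a : Fin 3, c a b from Finset.sum_comm]
    rw [Finset.sum_range_succ, Finset.sum_range_succ, Finset.sum_range_succ (f := fun b => ∑ a : Fin 3, c a b),
      Finset.sum_range_succ (f := fun b => ∑ a : Fin 3, c a b)]
    have hlow : (∑ b ∈ Finset.range γ, ∑ a : Fin 3, c' a b)
        = ∑ b ∈ Finset.range γ, ∑ a : Fin 3, c a b := by
      refine Finset.sum_congr rfl fun b hb => Finset.sum_congr rfl fun a _ => ?_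
      rw [hc'lo a b (Finset.mem_range.mp hb)]
    rw [hlow]
    have hcol : (∑ a : Fin 3, c' a γ) + (∑ a : Fin 3, c' a (γ+1))
        ≤ (∑ a : Fin 3, c a γ) + (∑ a : Fin 3, c a (γ+1)) := by
      simp only [hc'top, hc'γ]
      rw [Fin.sum_univ_three, Fin.sum_univ_three, Fin.sum_univ_three, Fin.sum_univ_three]
      rw [hT0, hT1, hT2, hd0, hd1, hd2]
      omega
    omega
  have hfin' : {p : Fin 3 × ℕ | c' p.1 p.2 ≠ 0}.Finite := by
    refine Set.Finite.subset (Set.Finite.prod (Set.finite_univ (α := Fin 3))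
      (Set.finite_Iio (γ+2))) ?_
    rintro ⟨a, b⟩ hp
    simp only [Set.mem_setOf_eq] at hp
    refine ⟨Set.mem_univ _, ?_⟩
    simp only [Set.mem_Iio]
    by_contra hb
    exact hp (hc'zero a b (by omega))
  have hMk : k ≤ M := by
    rw [hM]
    exact Nat.le_mul_of_pos_left k (by omega)
  have htop' : ∃ a, c' a (γ+1) ≠ 0 := by
    by_contra h
    push_neg at h
    have h0 := h 0; have h1 := h 1; have h2 := h 2
    rw [hc'top, hT0] at h0; rw [hc'top, hT1] at h1; rw [hc'top, hT2] at h2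
    omega
  have hmax' : ∀ b, (∃ a, c' a b ≠ 0) → b ≤ γ + 1 := by
    rintro b ⟨a, ha⟩
    by_contra hb
    exact ha (hc'zero a b (by omega))
  have e0 : c' 0 (γ+1) = M/4 := by rw [hc'top, hT0]
  have e1 : c' 1 (γ+1) = M%4/2 := by rw [hc'top, hT1]
  have e2 : c' 2 (γ+1) = M%2 := by rw [hc'top, hT2]
  refine ⟨c', hfin', ?_, ?_, htop', hmax', ?_⟩
  · rw [finsum3_eq _ (γ+2) (fun a b hb => by rw [hc'zero a b hb]; simp)]
    exact hQ'
  · rw [finsum3_eq _ (γ+2) hc'zero, finsum3_eq _ (γ+2) hczero]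
    exact hcount
  · rcases (by omega : k%4 = 0 ∨ k%4 = 1 ∨ k%4 = 2 ∨ k%4 = 3) with h4 | h4 | h4 | h4
    · left
      refine ⟨h4, ?_⟩
      have hm1' : m₀ = 1 := by rw [hm₀, if_neg (by omega), if_neg (by omega)]
      rw [hm1', one_mul] at hM
      rw [e0, e1, e2]
      simp only [Prod.mk.injEq]
      exact ⟨by omega, by omega, by omega⟩
    · right; left
      refine ⟨h4, ?_⟩
      rw [e0, e1, e2]
      rcases (by omega : m₀ = 1 ∨ m₀ = 2 ∨ m₀ = 3 ∨ m₀ = 4) with h | h | h | h <;>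
          rw [h] at hM <;> simp only [Prod.mk.injEq]
      · exact Or.inr (Or.inl ⟨by omega, by omega, by omega⟩)
      · exact Or.inr (Or.inr (Or.inl ⟨by omega, by omega, by omega⟩))
      · exact Or.inr (Or.inr (Or.inr ⟨by omega, by omega, by omega⟩))
      · exact Or.inl ⟨by omega, by omega, by omega⟩
    · right; right; left
      refine ⟨h4, ?_⟩
      rw [e0, e1, e2]
      have hm₀' : m₀ = (m-1)%2+1 := by rw [hm₀, if_neg (by omega), if_pos h4]
      rcases (by omega : m₀ = 1 ∨ m₀ = 2) with h | h <;>
          rw [h] at hM <;> simp only [Prod.mk.injEq]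
      · exact Or.inr ⟨by omega, by omega, by omega⟩
      · exact Or.inl ⟨by omega, by omega, by omega⟩
    · right; right; right
      refine ⟨h4, ?_⟩
      rw [e0, e1, e2]
      rcases (by omega : m₀ = 1 ∨ m₀ = 2 ∨ m₀ = 3 ∨ m₀ = 4) with h | h | h | h <;>
          rw [h] at hM <;> simp only [Prod.mk.injEq]
      · exact Or.inr (Or.inr (Or.inr ⟨by omega, by omega, by omega⟩))
      · exact Or.inr (Or.inr (Or.inl ⟨by omega, by omega, by omega⟩))
      · exact Or.inr (Or.inl ⟨by omega, by omega, by omega⟩)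
      · exact Or.inl ⟨by omega, by omega, by omega⟩
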